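/- For nonnegative reals S₀, B̄, T̄ with S₀ + B̄ + T̄ = S̄ > 0, we have 3S₀ + B̄ + 3T̄³/S̄² ≥ (2/3)·S̄. -/
import Mathlib

theorem lemma2_core (S₀ B T Sbar : ℝ) (hS₀ : 0 ≤ S₀) (hB : 0 ≤ B) (hT : 0 ≤ T)
    (hsum : S₀ + B + T = Sbar) (hSbar : 0 < Sbar) :
    3 * S₀ + B + 3 * T ^ 3 / Sbar ^ 2 ≥ (2 / 3) * Sbar := by
  have key : 3 * T ^ 3 / Sbar ^ 2 ≥ T - Sbar / 3 := by
    rw [ge_iff_le, le_div_iff₀ (by positivity)]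
    nlinarith [mul_nonneg hT (sq_nonneg (3*T - Sbar)), sq_nonneg (3*T - Sbar), hSbar.le]
  linarith
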